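/- Let α < 0, S > 0 and L, M ∈ ℝ satisfy the system 2(L−M)·tanh(L) = −α·√(√3·S) and (M−L)·tanh(M) = −α·√(√3·S). Set K := M − L, β := 1/√(√3·S), c₀ := √(S/√3), and define u₀ : ℝ² → ℝ by u₀(x,y) := cosh(L + 2Kβy) + 2·cosh(K(1−βy) + L)·cosh(√3·Kβx). Then u₀ satisfies the Robin boundary condition along the right slanted edge of the equilateral triangle, i.e. for every x ∈ ℝ, (√3/2)·∂₁u₀(x, √3(c₀ − x)) + (1/2)·∂₂u₀(x, √3(c₀ − x)) + α·u₀(x, √3(c₀ − x)) = 0, where ∂₁, ∂₂ denote the partial derivatives with respect to the first and second variables. (The vector (√3/2, 1/2) is the outward unit normal of the triangle along this edge, so this is exactly ∂u₀/∂n + α·u₀ = 0 there.) -/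

import Mathlib

/-- The ground state `u₀` of the Robin Laplacian on the equilateral triangle satisfies the
Robin boundary condition `∂u₀/∂n + α·u₀ = 0` along the right slanted edge
`y = √3(c₀ − x)`, whose outward unit normal is `(√3/2, 1/2)`. -/
theorem ground_state_robin_bc_slanted (α S L M : ℝ) (hα : α < 0) (hS : 0 < S)
    (hLM1 : 2 * (L - M) * Real.tanh L = -α * Real.sqrt (Real.sqrt 3 * S))
    (hLM2 : (M - L) * Real.tanh M = -α * Real.sqrt (Real.sqrt 3 * S))
    (K β c₀ : ℝ) (hK : K = M - L) (hβ : β = 1 / Real.sqrt (Real.sqrt 3 * S))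
    (hc₀ : c₀ = Real.sqrt (S / Real.sqrt 3))
    (u₀ : ℝ → ℝ → ℝ)
    (hu : ∀ x y : ℝ, u₀ x y = Real.cosh (L + 2 * K * β * y) +
      2 * Real.cosh (K * (1 - β * y) + L) * Real.cosh (Real.sqrt 3 * K * β * x)) :
    ∀ x : ℝ,
      (Real.sqrt 3 / 2) * deriv (fun s : ℝ => u₀ s (Real.sqrt 3 * (c₀ - x))) x +
        (1 / 2) * deriv (fun t : ℝ => u₀ x t) (Real.sqrt 3 * (c₀ - x)) +
        α * u₀ x (Real.sqrt 3 * (c₀ - x)) = 0 := by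
  intro x
  set h : ℝ := Real.sqrt (Real.sqrt 3 * S) with hhdef
  have h33 : Real.sqrt 3 * Real.sqrt 3 = 3 := Real.mul_self_sqrt (by norm_num)
  have h3pos : (0:ℝ) < Real.sqrt 3 := Real.sqrt_pos.mpr (by norm_num)
  have hhpos : 0 < h := Real.sqrt_pos.mpr (by positivity)
  have hβh : β * h = 1 := by
    rw [hβ]; exact one_div_mul_cancel (ne_of_gt hhpos)
  have key : Real.sqrt 3 * S = 3 * (S / Real.sqrt 3) := by
    field_simp
    linear_combination h33
  have hch : Real.sqrt 3 * c₀ = h := by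
    rw [hc₀, hhdef, key, Real.sqrt_mul (by norm_num : (0:ℝ) ≤ 3)]
  set w : ℝ := Real.sqrt 3 * β * x with hw
  have hbw : β * (Real.sqrt 3 * (c₀ - x)) = 1 - w := by
    linear_combination hw + β * hch + hβh
  set Y : ℝ := Real.sqrt 3 * (c₀ - x) with hY
  -- derivatives
  have hfun1 : (fun s : ℝ => u₀ s Y) = fun s : ℝ =>
      Real.cosh (L + 2 * K * β * Y) +
        2 * Real.cosh (K * (1 - β * Y) + L) * Real.cosh (Real.sqrt 3 * K * β * s) :=
    funext fun s => hu s Y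
  have hfun2 : (fun t : ℝ => u₀ x t) = fun t : ℝ =>
      Real.cosh (L + 2 * K * β * t) +
        2 * Real.cosh (K * (1 - β * t) + L) * Real.cosh (Real.sqrt 3 * K * β * x) :=
    funext fun t => hu x t
  have d1 : HasDerivAt (fun s : ℝ =>
      Real.cosh (L + 2 * K * β * Y) +
        2 * Real.cosh (K * (1 - β * Y) + L) * Real.cosh (Real.sqrt 3 * K * β * s))
      (2 * Real.cosh (K * (1 - β * Y) + L) *
        (Real.sinh (Real.sqrt 3 * K * β * x) * (Real.sqrt 3 * K * β))) x := by
    have hid : HasDerivAt (fun s : ℝ => Real.sqrt 3 * K * β * s) (Real.sqrt 3 * K * β) x := by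
      simpa using (hasDerivAt_id x).const_mul (Real.sqrt 3 * K * β)
    exact (hid.cosh.const_mul _).const_add _
  have d2 : HasDerivAt (fun t : ℝ =>
      Real.cosh (L + 2 * K * β * t) +
        2 * Real.cosh (K * (1 - β * t) + L) * Real.cosh (Real.sqrt 3 * K * β * x))
      (Real.sinh (L + 2 * K * β * Y) * (2 * K * β) +
        2 * (Real.sinh (K * (1 - β * Y) + L) * (K * -β)) *
          Real.cosh (Real.sqrt 3 * K * β * x)) Y := by
    have ha : HasDerivAt (fun t : ℝ => L + 2 * K * β * t) (2 * K * β) Y := by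
      simpa using ((hasDerivAt_id Y).const_mul (2 * K * β)).const_add L
    have hb : HasDerivAt (fun t : ℝ => K * (1 - β * t) + L) (K * -β) Y := by
      have hb0 : HasDerivAt (fun t : ℝ => 1 - β * t) (-β) Y := by
        simpa using ((hasDerivAt_id Y).const_mul β).const_sub 1
      exact ((hb0.const_mul K).add_const L)
    exact ha.cosh.add ((hb.cosh.const_mul 2).mul_const _)
  rw [hfun1, hfun2, d1.deriv, d2.deriv, hu]
  -- canonicalize arguments
  have e1 : L + 2 * K * β * Y = L + K + K - (K * w + K * w) := by
    linear_combination (2 * K) * hbw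
  have e2 : K * (1 - β * Y) + L = K * w + L := by
    linear_combination (-K) * hbw
  have e3 : Real.sqrt 3 * K * β * x = K * w := by
    rw [hw]; ring
  rw [e1, e2, e3]
  -- algebraic relations from the transcendental system
  have hcoshL : Real.cosh L ≠ 0 := ne_of_gt (Real.cosh_pos L)
  have hcoshM : Real.cosh M ≠ 0 := ne_of_gt (Real.cosh_pos M)
  have h1 : 2 * (L - M) * Real.sinh L = -α * h * Real.cosh L := by
    have h1' := hLM1
    rw [Real.tanh_eq_sinh_div_cosh] at h1'
    field_simp at h1'
    linear_combination h1'
  have h2 : (M - L) * Real.sinh M = -α * h * Real.cosh M := by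
    have h2' := hLM2
    rw [Real.tanh_eq_sinh_div_cosh] at h2'
    field_simp at h2'
    linear_combination h2'
  have r1 : α * Real.cosh L = 2 * (K * β) * Real.sinh L := by
    linear_combination β * h1 + (-(α * Real.cosh L)) * hβh + (-2 * β * Real.sinh L) * hK
  have r2 : α * Real.cosh M = -((K * β) * Real.sinh M) := by
    linear_combination β * h2 + (-(α * Real.cosh M)) * hβh + (β * Real.sinh M) * hK
  have hM : M = K + L := by rw [hK]; ring
  rw [hM, Real.cosh_add, Real.sinh_add] at r2
  have hPa : Real.cosh (K * w) ^ 2 - Real.sinh (K * w) ^ 2 = 1 :=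
    Real.cosh_sq_sub_sinh_sq (K * w)
  have hPK : Real.cosh K ^ 2 - Real.sinh K ^ 2 = 1 := Real.cosh_sq_sub_sinh_sq K
  simp only [Real.cosh_add, Real.sinh_add, Real.cosh_sub, Real.sinh_sub]
  set ca := Real.cosh (K * w)
  set sa := Real.sinh (K * w)
  set cK := Real.cosh K
  set sK := Real.sinh K
  set cL := Real.cosh L
  set sL := Real.sinh L
  linear_combination
    (2 * ((ca ^ 2 + sa ^ 2) * cK - 2 * sa * ca * sK)) * r2 + r1 +
      ((K * β) * sL * (sK ^ 2 - cK ^ 2 - 1) + α * cL * (2 + sK ^ 2 - cK ^ 2)) * hPa +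
      (-(K * β) * sL * (1 + 2 * sa ^ 2) - 2 * α * sL * ca * sa -
        α * cL * (1 + 2 * sa ^ 2) - 2 * (K * β) * cL * ca * sa) * hPK +
      ((ca * cL + sa * sL) * sa * K * β) * h33
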